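/- Let μ be a self-similar measure on the middle-thirds Cantor set C. Then for all x = π(𝚒) except for at most countably many points (the endpoints of construction intervals), liminf_{r↓0} log μ([x, x+r])/log r = liminf_{r↓0} log μ([x-r, x+r])/log r. -/

import Mathlib

open Set MeasureTheory Filter
open scoped ENNReal Topology

/-- The coding map `π : {1,2}^ℕ → C` of the middle-thirds Cantor set, where the
symbol `1` (coded by `0 : Fin 2`) means "left" and `2` (coded by `1 : Fin 2`)
means "right". -/
noncomputable def cantorPi (i : ℕ → Fin 2) : ℝ :=
  ∑' k : ℕ, (if i k = 1 then (2:ℝ) else 0) / 3 ^ (k + 1)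

noncomputable def cylL (i : ℕ → Fin 2) (n : ℕ) : ℝ :=
  ∑ k ∈ Finset.range n, (if i k = 1 then (2:ℝ) else 0) / 3 ^ (k + 1)

lemma cantor_summable (i : ℕ → Fin 2) :
    Summable (fun k : ℕ => (if i k = 1 then (2:ℝ) else 0) / 3 ^ (k + 1)) := by
  apply Summable.of_nonneg_of_le (fun k => by positivity)
    (fun k => ?_)
    ((summable_geometric_of_lt_one (by norm_num) (by norm_num : (1/3:ℝ) < 1)).mul_left (2/3))
  have h : (2/3 : ℝ) * (1/3)^k = 2 / 3^(k+1) := by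
    rw [div_pow, one_pow, pow_succ]; ring
  rw [h]
  gcongr
  split <;> norm_num

lemma cylL_nonneg (i : ℕ → Fin 2) (n : ℕ) : 0 ≤ cylL i n :=
  Finset.sum_nonneg fun k _ => by positivity

lemma geom_sum_aux (n : ℕ) : ∑ k ∈ Finset.range n, (2:ℝ)/3^(k+1) = 1 - (1/3)^n := by
  induction n with
  | zero => simp
  | succ n ih =>
    rw [Finset.sum_range_succ, ih]
    have h3 : (0:ℝ) < 3^n := by positivity
    rw [div_pow, one_pow, pow_succ, pow_succ]
    field_simp
    have h13 : (1/3:ℝ)^n * 3^n = 1 := by rw [← mul_pow]; norm_num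
    linear_combination h13

lemma cylL_add_le_one (i : ℕ → Fin 2) (n : ℕ) : cylL i n + (1/3:ℝ)^n ≤ 1 := by
  have h : cylL i n ≤ ∑ k ∈ Finset.range n, (2:ℝ)/3^(k+1) := by
    apply Finset.sum_le_sum
    intro k _
    gcongr
    split <;> norm_num
  rw [geom_sum_aux] at h
  linarith

lemma cylL_le_cantorPi (i : ℕ → Fin 2) (n : ℕ) : cylL i n ≤ cantorPi i := by
  have h := Summable.sum_add_tsum_nat_add n (cantor_summable i)
  have ht : 0 ≤ ∑' k : ℕ, (if i (k + n) = 1 then (2:ℝ) else 0) / 3 ^ (k + n + 1) :=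
    tsum_nonneg fun k => by positivity
  rw [cantorPi, ← h]
  unfold cylL
  linarith

lemma cantorPi_le_cylL (i : ℕ → Fin 2) (n : ℕ) : cantorPi i ≤ cylL i n + (1/3:ℝ)^n := by
  have h := Summable.sum_add_tsum_nat_add n (cantor_summable i)
  have hsum2 : Summable (fun k : ℕ => (if i (k + n) = 1 then (2:ℝ) else 0) / 3 ^ (k + n + 1)) := by
    exact_mod_cast (summable_nat_add_iff n).mpr (cantor_summable i)
  have hgeom : Summable (fun k : ℕ => (2/3^(n+1) : ℝ) * (1/3)^k) :=
    (summable_geometric_of_lt_one (by norm_num) (by norm_num : (1/3:ℝ) < 1)).mul_left _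
  have ht : (∑' k : ℕ, (if i (k + n) = 1 then (2:ℝ) else 0) / 3 ^ (k + n + 1))
      ≤ ∑' k : ℕ, (2/3^(n+1) : ℝ) * (1/3)^k := by
    apply Summable.tsum_le_tsum _ hsum2 hgeom
    intro k
    have he : (2/3^(n+1) : ℝ) * (1/3)^k = 2 / 3^(k+n+1) := by
      rw [div_pow, one_pow]
      rw [div_mul_div_comm]
      congr 1
      · ring
      · rw [← pow_add]; ring_nf
    rw [he]
    gcongr
    split <;> norm_num
  have hval : (∑' k : ℕ, (2/3^(n+1) : ℝ) * (1/3)^k) = (1/3)^n := by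
    rw [tsum_mul_left, tsum_geometric_of_lt_one (by norm_num) (by norm_num : (1/3:ℝ) < 1)]
    rw [div_pow, one_pow]
    rw [pow_succ]
    norm_num
    field_simp
  rw [cantorPi, ← h]
  unfold cylL
  rw [hval] at ht
  linarith

lemma cylL_shift (j : ℕ → Fin 2) (n : ℕ) :
    cylL j (n+1) = (if j 0 = 1 then (2:ℝ) else 0)/3 + cylL (fun k => j (k+1)) n / 3 := by
  unfold cylL
  rw [Finset.sum_range_succ']
  rw [Finset.sum_div]
  rw [add_comm]
  congr 1
  · norm_num
  · apply Finset.sum_congr rfl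
    intro k _
    rw [div_div, ← pow_succ]

lemma cylL_succ (j : ℕ → Fin 2) (n : ℕ) :
    cylL j (n+1) = cylL j n + (if j n = 1 then (2:ℝ) else 0) / 3 ^ (n+1) :=
  Finset.sum_range_succ _ n
section meas
variable {p₁ p₂ : ℝ≥0∞} {μ : Measure ℝ}

lemma step_apply (hself : μ = p₁ • Measure.map (fun x : ℝ => x / 3) μ
      + p₂ • Measure.map (fun x : ℝ => x / 3 + 2 / 3) μ)
    (s t₁ t₂ : Set ℝ) (hs : MeasurableSet s)
    (h1 : (fun x : ℝ => x / 3) ⁻¹' s = t₁)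
    (h2 : (fun x : ℝ => x / 3 + 2/3) ⁻¹' s = t₂) :
    μ s = p₁ * μ t₁ + p₂ * μ t₂ := by
  conv_lhs => rw [hself]
  rw [Measure.add_apply, Measure.smul_apply, Measure.smul_apply,
    Measure.map_apply (by fun_prop) hs, Measure.map_apply (by fun_prop) hs, h1, h2,
    smul_eq_mul, smul_eq_mul]

lemma step_Icc (hself : μ = p₁ • Measure.map (fun x : ℝ => x / 3) μ
      + p₂ • Measure.map (fun x : ℝ => x / 3 + 2 / 3) μ) (a b : ℝ) :
    μ (Icc a b) = p₁ * μ (Icc (3*a) (3*b)) + p₂ * μ (Icc (3*a-2) (3*b-2)) := by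
  apply step_apply hself _ _ _ measurableSet_Icc
  · ext y
    simp only [mem_preimage, mem_Icc]
    constructor <;> intro h <;> constructor <;> linarith [h.1, h.2]
  · ext y
    simp only [mem_preimage, mem_Icc]
    constructor <;> intro h <;> constructor <;> linarith [h.1, h.2]

lemma step_Iio (hself : μ = p₁ • Measure.map (fun x : ℝ => x / 3) μ
      + p₂ • Measure.map (fun x : ℝ => x / 3 + 2 / 3) μ) (a : ℝ) :
    μ (Iio a) = p₁ * μ (Iio (3*a)) + p₂ * μ (Iio (3*a-2)) := by
  apply step_apply hself _ _ _ measurableSet_Iio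
  · ext y
    simp only [mem_preimage, mem_Iio]
    constructor <;> intro h <;> linarith
  · ext y
    simp only [mem_preimage, mem_Iio]
    constructor <;> intro h <;> linarith

lemma step_Ioi (hself : μ = p₁ • Measure.map (fun x : ℝ => x / 3) μ
      + p₂ • Measure.map (fun x : ℝ => x / 3 + 2 / 3) μ) (a : ℝ) :
    μ (Ioi a) = p₁ * μ (Ioi (3*a)) + p₂ * μ (Ioi (3*a-2)) := by
  apply step_apply hself _ _ _ measurableSet_Ioi
  · ext y
    simp only [mem_preimage, mem_Ioi]
    constructor <;> intro h <;> linarith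
  · ext y
    simp only [mem_preimage, mem_Ioi]
    constructor <;> intro h <;> linarith

lemma null_Iio (hp₁ : 0 < p₁) (hp₂ : 0 < p₂) (hsum : p₁ + p₂ = 1)
    (hprob : IsProbabilityMeasure μ)
    (hself : μ = p₁ • Measure.map (fun x : ℝ => x / 3) μ
      + p₂ • Measure.map (fun x : ℝ => x / 3 + 2 / 3) μ) :
    μ (Iio 0) = 0 := by
  have hp₂top : p₂ ≠ ⊤ := by
    intro h; rw [h] at hsum; simp at hsum
  have key : ∀ n : ℕ, μ (Iio (1 - 3^n : ℝ)) = μ (Iio 0) := by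
    intro n
    induction n with
    | zero => norm_num
    | succ n ih =>
      have hc : (1:ℝ) - 3^n ≤ 0 := by
        have : (1:ℝ) ≤ 3^n := one_le_pow₀ (by norm_num)
        linarith
      have hstep := step_Iio hself (1 - 3^n : ℝ)
      rw [ih] at hstep
      have hu : μ (Iio (3*(1 - 3^n) : ℝ)) ≤ μ (Iio 0) := by
        apply measure_mono
        intro y hy
        simp only [mem_Iio] at *
        nlinarith
      have hv : μ (Iio (3*(1 - 3^n) - 2 : ℝ)) ≤ μ (Iio 0) := by
        apply measure_mono
        intro y hy
        simp only [mem_Iio] at *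
        nlinarith
      -- from hstep : μ (Iio 0) = p₁ * u + p₂ * v with u, v ≤ μ (Iio 0), conclude v = μ (Iio 0)
      have hle : μ (Iio 0) ≤ p₁ * μ (Iio 0) + p₂ * μ (Iio (3*(1 - 3^n) - 2 : ℝ)) := by
        calc μ (Iio 0) = p₁ * μ (Iio (3*(1 - 3^n) : ℝ)) + p₂ * μ (Iio (3*(1 - 3^n) - 2 : ℝ)) := hstep
          _ ≤ p₁ * μ (Iio 0) + p₂ * μ (Iio (3*(1 - 3^n) - 2 : ℝ)) := by gcongr
      have heq : p₁ * μ (Iio 0) + p₂ * μ (Iio 0) = μ (Iio 0) := by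
        rw [← add_mul, hsum, one_mul]
      nth_rewrite 1 [← heq] at hle
      have hle2 : p₂ * μ (Iio 0) ≤ p₂ * μ (Iio (3*(1 - 3^n) - 2 : ℝ)) :=
        ENNReal.le_of_add_le_add_left (by
          exact ENNReal.mul_ne_top (by
            intro h; rw [h] at hsum; simp at hsum) (measure_ne_top μ _)) hle
      have hge : μ (Iio 0) ≤ μ (Iio (3*(1 - 3^n) - 2 : ℝ)) := by
        rwa [ENNReal.mul_le_mul_iff_right hp₂.ne' hp₂top] at hle2
      have : μ (Iio (3*(1 - 3^n) - 2 : ℝ)) = μ (Iio 0) := le_antisymm hv hge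
      rw [← this]
      congr 1
      push_cast
      ring_nf
  -- now take the limit
  have htend : Tendsto (fun n : ℕ => μ (Iio (1 - 3^n : ℝ))) atTop
      (𝓝 (μ (⋂ n : ℕ, Iio (1 - 3^n : ℝ)))) := by
    apply tendsto_measure_iInter_atTop
      (fun n => measurableSet_Iio.nullMeasurableSet)
    · intro n m hnm
      intro y hy
      simp only [mem_Iio] at *
      have : (3:ℝ)^n ≤ 3^m := pow_le_pow_right₀ (by norm_num) hnm
      linarith
    · exact ⟨0, measure_ne_top μ _⟩
  have hempty : (⋂ n : ℕ, Iio (1 - 3^n : ℝ)) = ∅ := by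
    ext y
    simp only [mem_iInter, mem_Iio, mem_empty_iff_false, iff_false, not_forall, not_lt]
    obtain ⟨n, hn⟩ := pow_unbounded_of_one_lt (1 - y) (by norm_num : (1:ℝ) < 3)
    exact ⟨n, by linarith⟩
  rw [hempty] at htend
  simp only [measure_empty] at htend
  have hconst : Tendsto (fun n : ℕ => μ (Iio (1 - 3^n : ℝ))) atTop (𝓝 (μ (Iio 0))) := by
    simp only [key]
    exact tendsto_const_nhds
  exact tendsto_nhds_unique hconst htend

lemma null_Ioi (hp₁ : 0 < p₁) (hp₂ : 0 < p₂) (hsum : p₁ + p₂ = 1)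
    (hprob : IsProbabilityMeasure μ)
    (hself : μ = p₁ • Measure.map (fun x : ℝ => x / 3) μ
      + p₂ • Measure.map (fun x : ℝ => x / 3 + 2 / 3) μ) :
    μ (Ioi 1) = 0 := by
  have hp₁top : p₁ ≠ ⊤ := by
    intro h; rw [h] at hsum; simp at hsum
  have key : ∀ n : ℕ, μ (Ioi (3^n : ℝ)) = μ (Ioi 1) := by
    intro n
    induction n with
    | zero => norm_num
    | succ n ih =>
      have hc : (1:ℝ) ≤ 3^n := one_le_pow₀ (by norm_num)
      have hstep := step_Ioi hself (3^n : ℝ)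
      rw [ih] at hstep
      have hu : μ (Ioi (3*(3^n) : ℝ)) ≤ μ (Ioi 1) := by
        apply measure_mono
        intro y hy
        simp only [mem_Ioi] at *
        nlinarith
      have hv : μ (Ioi (3*(3^n) - 2 : ℝ)) ≤ μ (Ioi 1) := by
        apply measure_mono
        intro y hy
        simp only [mem_Ioi] at *
        nlinarith
      have hle : μ (Ioi 1) ≤ p₂ * μ (Ioi 1) + p₁ * μ (Ioi (3*(3^n) : ℝ)) := by
        calc μ (Ioi 1) = p₁ * μ (Ioi (3*(3^n) : ℝ)) + p₂ * μ (Ioi (3*(3^n) - 2 : ℝ)) := hstep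
          _ ≤ p₁ * μ (Ioi (3*(3^n) : ℝ)) + p₂ * μ (Ioi 1) := by gcongr
          _ = p₂ * μ (Ioi 1) + p₁ * μ (Ioi (3*(3^n) : ℝ)) := by ring
      have heq : p₂ * μ (Ioi 1) + p₁ * μ (Ioi 1) = μ (Ioi 1) := by
        rw [← add_mul, add_comm p₂ p₁, hsum, one_mul]
      nth_rewrite 1 [← heq] at hle
      have hle2 : p₁ * μ (Ioi 1) ≤ p₁ * μ (Ioi (3*(3^n) : ℝ)) :=
        ENNReal.le_of_add_le_add_left
          (ENNReal.mul_ne_top (by intro h; rw [h] at hsum; simp at hsum)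
            (measure_ne_top μ _)) hle
      have hge : μ (Ioi 1) ≤ μ (Ioi (3*(3^n) : ℝ)) := by
        rwa [ENNReal.mul_le_mul_iff_right hp₁.ne' hp₁top] at hle2
      have : μ (Ioi (3*(3^n) : ℝ)) = μ (Ioi 1) := le_antisymm hu hge
      rw [← this]
      congr 1
      ring
  have htend : Tendsto (fun n : ℕ => μ (Ioi (3^n : ℝ))) atTop
      (𝓝 (μ (⋂ n : ℕ, Ioi (3^n : ℝ)))) := by
    apply tendsto_measure_iInter_atTop
      (fun n => measurableSet_Ioi.nullMeasurableSet)
    · intro n m hnm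
      intro y hy
      simp only [mem_Ioi] at *
      have : (3:ℝ)^n ≤ 3^m := pow_le_pow_right₀ (by norm_num) hnm
      linarith
    · exact ⟨0, measure_ne_top μ _⟩
  have hempty : (⋂ n : ℕ, Ioi (3^n : ℝ)) = ∅ := by
    ext y
    simp only [mem_iInter, mem_Ioi, mem_empty_iff_false, iff_false, not_forall, not_lt]
    obtain ⟨n, hn⟩ := pow_unbounded_of_one_lt y (by norm_num : (1:ℝ) < 3)
    exact ⟨n, hn.le⟩
  rw [hempty] at htend
  simp only [measure_empty] at htend
  have hconst : Tendsto (fun n : ℕ => μ (Ioi (3^n : ℝ))) atTop (𝓝 (μ (Ioi 1))) := by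
    simp only [key]
    exact tendsto_const_nhds
  exact tendsto_nhds_unique hconst htend

lemma null_outside (hp₁ : 0 < p₁) (hp₂ : 0 < p₂) (hsum : p₁ + p₂ = 1)
    (hprob : IsProbabilityMeasure μ)
    (hself : μ = p₁ • Measure.map (fun x : ℝ => x / 3) μ
      + p₂ • Measure.map (fun x : ℝ => x / 3 + 2 / 3) μ)
    {s : Set ℝ} (hs : s ⊆ (Icc (0:ℝ) 1)ᶜ) : μ s = 0 := by
  have hsub : (Icc (0:ℝ) 1)ᶜ ⊆ Iio 0 ∪ Ioi 1 := by
    intro y hy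
    simp only [mem_compl_iff, mem_Icc, not_and, not_le] at hy
    by_cases h0 : 0 ≤ y
    · exact Or.inr (hy h0)
    · exact Or.inl (lt_of_not_ge h0)
  exact measure_mono_null (hs.trans hsub)
    (measure_union_null (null_Iio hp₁ hp₂ hsum hprob hself)
      (null_Ioi hp₁ hp₂ hsum hprob hself))

end meas

noncomputable def cylMass (p₁ p₂ : ℝ≥0∞) (i : ℕ → Fin 2) (n : ℕ) : ℝ≥0∞ :=
  ∏ k ∈ Finset.range n, (if i k = 1 then p₂ else p₁)

section meas
variable {p₁ p₂ : ℝ≥0∞} {μ : Measure ℝ}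

lemma fin2_cases (a : Fin 2) : a = 0 ∨ a = 1 := by omega

lemma cylMass_shift (j : ℕ → Fin 2) (n : ℕ) :
    cylMass p₁ p₂ j (n+1) = (if j 0 = 1 then p₂ else p₁) * cylMass p₁ p₂ (fun k => j (k+1)) n := by
  unfold cylMass
  rw [Finset.prod_range_succ', mul_comm]

lemma mass_le_measure (hp₁ : 0 < p₁) (hp₂ : 0 < p₂) (hsum : p₁ + p₂ = 1)
    (hprob : IsProbabilityMeasure μ)
    (hself : μ = p₁ • Measure.map (fun x : ℝ => x / 3) μ
      + p₂ • Measure.map (fun x : ℝ => x / 3 + 2 / 3) μ) :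
    ∀ n (j : ℕ → Fin 2),
      cylMass p₁ p₂ j n ≤ μ (Icc (cylL j n) (cylL j n + (1/3:ℝ)^n)) := by
  intro n
  induction n with
  | zero =>
    intro j
    have h0 : cylL j 0 = 0 := by simp [cylL]
    have hm : cylMass p₁ p₂ j 0 = 1 := by simp [cylMass]
    rw [h0, hm]
    simp only [pow_zero, zero_add]
    calc (1:ℝ≥0∞) = μ univ := measure_univ.symm
      _ = μ (Icc (0:ℝ) 1 ∪ (Icc (0:ℝ) 1)ᶜ) := by rw [union_compl_self]
      _ ≤ μ (Icc (0:ℝ) 1) + μ ((Icc (0:ℝ) 1)ᶜ) := measure_union_le _ _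
      _ = μ (Icc (0:ℝ) 1) := by
          rw [null_outside hp₁ hp₂ hsum hprob hself (subset_refl _), add_zero]
  | succ n ih =>
    intro j
    have hstep := step_Icc hself (cylL j (n+1)) (cylL j (n+1) + (1/3:ℝ)^(n+1))
    have hpow : (1/3:ℝ)^(n+1) = (1/3:ℝ)^n/3 := by rw [pow_succ]; ring
    rcases fin2_cases (j 0) with h0 | h0
    · -- left branch
      have hL : cylL j (n+1) = cylL (fun k => j (k+1)) n / 3 := by
        rw [cylL_shift, h0]; norm_num
      set L := cylL (fun k => j (k+1)) n with hLdef
      have e1 : 3 * cylL j (n+1) = L := by rw [hL]; ring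
      have e2 : 3 * (cylL j (n+1) + (1/3:ℝ)^(n+1)) = L + (1/3:ℝ)^n := by
        rw [hL, hpow]; ring
      rw [e1, e2] at hstep
      have hm : cylMass p₁ p₂ j (n+1) = p₁ * cylMass p₁ p₂ (fun k => j (k+1)) n := by
        rw [cylMass_shift, h0]; norm_num
      rw [hstep, hm]
      calc p₁ * cylMass p₁ p₂ (fun k => j (k+1)) n
          ≤ p₁ * μ (Icc L (L + (1/3:ℝ)^n)) := by gcongr; exact ih _
        _ ≤ p₁ * μ (Icc L (L + (1/3:ℝ)^n)) + p₂ * μ (Icc (3 * cylL j (n+1) - 2)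
              (3 * (cylL j (n+1) + (1/3:ℝ)^(n+1)) - 2)) := le_add_right le_rfl
        _ = _ := by rw [e1, e2]
    · -- right branch
      have hL : cylL j (n+1) = 2/3 + cylL (fun k => j (k+1)) n / 3 := by
        rw [cylL_shift, h0]; norm_num
      set L := cylL (fun k => j (k+1)) n with hLdef
      have e1 : 3 * cylL j (n+1) - 2 = L := by rw [hL]; ring
      have e2 : 3 * (cylL j (n+1) + (1/3:ℝ)^(n+1)) - 2 = L + (1/3:ℝ)^n := by
        rw [hL, hpow]; ring
      rw [e1, e2] at hstep
      have hm : cylMass p₁ p₂ j (n+1) = p₂ * cylMass p₁ p₂ (fun k => j (k+1)) n := by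
        rw [cylMass_shift, h0]; norm_num
      rw [hstep, hm]
      calc p₂ * cylMass p₁ p₂ (fun k => j (k+1)) n
          ≤ p₂ * μ (Icc L (L + (1/3:ℝ)^n)) := by gcongr; exact ih _
        _ ≤ p₁ * μ (Icc (3 * cylL j (n+1)) (3 * (cylL j (n+1) + (1/3:ℝ)^(n+1))))
            + p₂ * μ (Icc L (L + (1/3:ℝ)^n)) := le_add_self
        _ = _ := rfl

lemma measure_le_mass (hp₁ : 0 < p₁) (hp₂ : 0 < p₂) (hsum : p₁ + p₂ = 1)
    (hprob : IsProbabilityMeasure μ)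
    (hself : μ = p₁ • Measure.map (fun x : ℝ => x / 3) μ
      + p₂ • Measure.map (fun x : ℝ => x / 3 + 2 / 3) μ) :
    ∀ n (j : ℕ → Fin 2) (a b : ℝ), cylL j n - (1/3:ℝ)^n < a → b < cylL j n + 2*(1/3:ℝ)^n →
      μ (Icc a b) ≤ cylMass p₁ p₂ j n := by
  intro n
  induction n with
  | zero =>
    intro j a b _ _
    have hm : cylMass p₁ p₂ j 0 = 1 := by simp [cylMass]
    rw [hm]
    exact prob_le_one
  | succ n ih =>
    intro j a b h1 h2
    have hstep := step_Icc hself a b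
    have hpow : (1/3:ℝ)^(n+1) = (1/3:ℝ)^n/3 := by rw [pow_succ]; ring
    have hpow1 : (1/3:ℝ)^n ≤ 1 := pow_le_one₀ (by norm_num) (by norm_num)
    rcases fin2_cases (j 0) with h0 | h0
    · have hL : cylL j (n+1) = cylL (fun k => j (k+1)) n / 3 := by
        rw [cylL_shift, h0]; norm_num
      set L := cylL (fun k => j (k+1)) n with hLdef
      have hL0 : 0 ≤ L := cylL_nonneg _ _
      have hL1 : L + (1/3:ℝ)^n ≤ 1 := cylL_add_le_one _ _
      have ht1 : μ (Icc (3*a) (3*b)) ≤ cylMass p₁ p₂ (fun k => j (k+1)) n := by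
        apply ih _ _ _ (by rw [hL] at h1; linarith) (by rw [hL] at h2; linarith)
      have ht2 : μ (Icc (3*a-2) (3*b-2)) = 0 := by
        apply null_outside hp₁ hp₂ hsum hprob hself
        intro y hy
        simp only [mem_Icc] at hy
        simp only [mem_compl_iff, mem_Icc, not_and, not_le]
        intro hy0
        rw [hL] at h2
        nlinarith [hy.2]
      rw [hstep, ht2, mul_zero, add_zero]
      have hm : cylMass p₁ p₂ j (n+1) = p₁ * cylMass p₁ p₂ (fun k => j (k+1)) n := by
        rw [cylMass_shift, h0]; norm_num
      rw [hm]
      gcongr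
    · have hL : cylL j (n+1) = 2/3 + cylL (fun k => j (k+1)) n / 3 := by
        rw [cylL_shift, h0]; norm_num
      set L := cylL (fun k => j (k+1)) n with hLdef
      have hL0 : 0 ≤ L := cylL_nonneg _ _
      have hL1 : L + (1/3:ℝ)^n ≤ 1 := cylL_add_le_one _ _
      have ht1 : μ (Icc (3*a-2) (3*b-2)) ≤ cylMass p₁ p₂ (fun k => j (k+1)) n := by
        apply ih _ _ _ (by rw [hL] at h1; linarith) (by rw [hL] at h2; linarith)
      have ht2 : μ (Icc (3*a) (3*b)) = 0 := by
        apply null_outside hp₁ hp₂ hsum hprob hself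
        intro y hy
        simp only [mem_Icc] at hy
        simp only [mem_compl_iff, mem_Icc, not_and, not_le]
        intro hy0
        rw [hL] at h1
        nlinarith [hy.1]
      rw [hstep, ht2, mul_zero, zero_add]
      have hm : cylMass p₁ p₂ j (n+1) = p₂ * cylMass p₁ p₂ (fun k => j (k+1)) n := by
        rw [cylMass_shift, h0]; norm_num
      rw [hm]
      gcongr

end meas
set_option maxHeartbeats 1000000 in
/-- For a self-similar measure `μ` on the middle-thirds Cantor set (with positive
weights `p₁, p₂`), at all points `x = π(𝚒)` of the Cantor set except at most
countably many, the lower local dimension can be computed using the one-sided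
intervals `[x, x+r]`. -/
theorem stmt_14 (p₁ p₂ : ℝ≥0∞) (hp₁ : 0 < p₁) (hp₂ : 0 < p₂) (hsum : p₁ + p₂ = 1)
    (μ : Measure ℝ) (hprob : IsProbabilityMeasure μ)
    (hself : μ = p₁ • Measure.map (fun x : ℝ => x / 3) μ
        + p₂ • Measure.map (fun x : ℝ => x / 3 + 2 / 3) μ) :
    ∃ D : Set ℝ, D.Countable ∧
      ∀ i : ℕ → Fin 2, cantorPi i ∉ D →
        liminf (fun r : ℝ =>
            Real.log (μ (Icc (cantorPi i) (cantorPi i + r))).toReal / Real.log r)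
          (𝓝[>] 0)
        = liminf (fun r : ℝ =>
            Real.log (μ (Icc (cantorPi i - r) (cantorPi i + r))).toReal / Real.log r)
          (𝓝[>] 0) := by
  classical
  have hp₁le : p₁ ≤ 1 := by rw [← hsum]; exact le_self_add
  have hp₂le : p₂ ≤ 1 := by rw [← hsum]; exact le_add_self
  have hp₁top : p₁ ≠ ⊤ := (hp₁le.trans_lt ENNReal.one_lt_top).ne
  have hp₂top : p₂ ≠ ⊤ := (hp₂le.trans_lt ENNReal.one_lt_top).ne
  refine ⟨cantorPi '' {j : ℕ → Fin 2 | ∃ N c, ∀ m, N ≤ m → j m = c}, ?_, ?_⟩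
  · apply Set.Countable.image
    have hrw : {j : ℕ → Fin 2 | ∃ N c, ∀ m, N ≤ m → j m = c} =
        ⋃ (N : ℕ), ⋃ (c : Fin 2), {j : ℕ → Fin 2 | ∀ m, N ≤ m → j m = c} := by
      ext j; simp
    rw [hrw]
    refine Set.countable_iUnion fun N => Set.countable_iUnion fun c => ?_
    have hsub : {j : ℕ → Fin 2 | ∀ m, N ≤ m → j m = c} ⊆
        Set.range (fun (v : Fin N → Fin 2) =>
          (fun m => if h : m < N then v ⟨m, h⟩ else c : ℕ → Fin 2)) := by
      intro j hj
      refine ⟨fun k => j k, funext fun m => ?_⟩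
      by_cases h : m < N
      · simp [h]
      · simp only [h, dite_false]
        exact (hj m (le_of_not_gt h)).symm
    exact (Set.countable_range _).mono hsub
  intro i hiD
  set x := cantorPi i with hxdef
  have hfin2' : ∀ a : Fin 2, a ≠ 0 → a = 1 := by decide
  have hzeros : ∀ N, ∃ m, N ≤ m ∧ i m = 0 := by
    intro N
    by_contra hcon
    push_neg at hcon
    exact hiD ⟨i, ⟨N, 1, fun m hm => hfin2' _ (hcon m hm)⟩, rfl⟩
  have hmass_pos : ∀ n, 0 < cylMass p₁ p₂ i n := by
    intro n
    apply CanonicallyOrderedAdd.prod_pos.mpr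
    intro k _
    split
    · exact hp₂
    · exact hp₁
  have hmass_le_one : ∀ n, cylMass p₁ p₂ i n ≤ 1 := by
    intro n
    apply Finset.prod_le_one (fun k _ => zero_le)
    intro k _
    split
    · exact hp₂le
    · exact hp₁le
  have hmass_top : ∀ n, cylMass p₁ p₂ i n ≠ ⊤ :=
    fun n => ((hmass_le_one n).trans_lt ENNReal.one_lt_top).ne
  have hμfin : ∀ s : Set ℝ, μ s ≠ ⊤ := fun s => measure_ne_top μ s
  have hxl : ∀ n, cylL i n ≤ x := cylL_le_cantorPi i
  have hxu : ∀ n, x ≤ cylL i n + (1/3:ℝ)^n := cantorPi_le_cylL i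
  have upper2 : ∀ (n : ℕ) (r : ℝ), r < (1/3:ℝ)^n →
      μ (Icc (x - r) (x + r)) ≤ cylMass p₁ p₂ i n := by
    intro n r hrn
    apply measure_le_mass hp₁ hp₂ hsum hprob hself n i
    · linarith [hxl n]
    · linarith [hxu n]
  have lower1 : ∀ m, i m = 0 → p₂ * cylMass p₁ p₂ i m ≤ μ (Icc x (x + (1/3:ℝ)^m)) := by
    intro m hm
    set j : ℕ → Fin 2 := Function.update i m 1 with hjdef
    have hpowm : (1/3:ℝ)^m = 3 * (1/3)^(m+1) := by rw [pow_succ]; ring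
    have hcylim : cylL i (m+1) = cylL i m := by
      rw [cylL_succ, hm]
      norm_num
    have hcylj : cylL j (m+1) = cylL i m + 2 * (1/3:ℝ)^(m+1) := by
      rw [cylL_succ]
      have h1 : cylL j m = cylL i m := by
        unfold cylL
        apply Finset.sum_congr rfl
        intro k hk
        have hkm : k ≠ m := by simp only [Finset.mem_range] at hk; omega
        rw [hjdef, Function.update_of_ne hkm]
      have h2 : (if j m = 1 then (2:ℝ) else 0) / 3 ^ (m+1) = 2 * (1/3:ℝ)^(m+1) := by
        have hjm : j m = 1 := by rw [hjdef]; simp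
        rw [hjm, if_pos rfl, div_pow, one_pow]
        ring
      rw [h1, h2]
    have hmassj : cylMass p₁ p₂ j (m+1) = cylMass p₁ p₂ i m * p₂ := by
      unfold cylMass
      rw [Finset.prod_range_succ]
      congr 1
      · apply Finset.prod_congr rfl
        intro k hk
        have hkm : k ≠ m := by simp only [Finset.mem_range] at hk; omega
        rw [hjdef, Function.update_of_ne hkm]
      · rw [hjdef]
        simp [Function.update_self]
    have hE := mass_le_measure hp₁ hp₂ hsum hprob hself (m+1) j
    calc p₂ * cylMass p₁ p₂ i m = cylMass p₁ p₂ j (m+1) := by rw [hmassj, mul_comm]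
      _ ≤ μ (Icc (cylL j (m+1)) (cylL j (m+1) + (1/3:ℝ)^(m+1))) := hE
      _ ≤ μ (Icc x (x + (1/3:ℝ)^m)) := by
          apply measure_mono
          apply Icc_subset_Icc
          · rw [hcylj]
            have h := hxu (m+1)
            rw [hcylim] at h
            have hp : (0:ℝ) < (1/3)^(m+1) := by positivity
            linarith
          · rw [hcylj]
            have h := hxl m
            linarith [hpowm]
  have hμ1pos : ∀ r : ℝ, 0 < r → 0 < μ (Icc x (x + r)) := by
    intro r hr
    obtain ⟨K, hK⟩ := exists_pow_lt_of_lt_one hr (by norm_num : (1/3:ℝ) < 1)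
    obtain ⟨m, hmK, hm0⟩ := hzeros K
    have hle : (1/3:ℝ)^m ≤ r :=
      le_trans (pow_le_pow_of_le_one (by norm_num) (by norm_num) hmK) hK.le
    calc (0:ℝ≥0∞) < p₂ * cylMass p₁ p₂ i m :=
          ENNReal.mul_pos hp₂.ne' (hmass_pos m).ne'
      _ ≤ μ (Icc x (x + (1/3:ℝ)^m)) := lower1 m hm0
      _ ≤ μ (Icc x (x + r)) := measure_mono (Icc_subset_Icc le_rfl (by linarith))
  have hμ2pos : ∀ r : ℝ, 0 < r → 0 < μ (Icc (x - r) (x + r)) := by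
    intro r hr
    exact lt_of_lt_of_le (hμ1pos r hr)
      (measure_mono (Icc_subset_Icc (by linarith) le_rfl))
  -- real-valued quantities
  set F : ℝ → ℝ := fun r => Real.log (μ (Icc x (x + r))).toReal / Real.log r with hFdef
  set G : ℝ → ℝ := fun r => Real.log (μ (Icc (x - r) (x + r))).toReal / Real.log r with hGdef
  show liminf F (𝓝[>] 0) = liminf G (𝓝[>] 0)
  have hμ1R : ∀ r : ℝ, 0 < r →
      0 < (μ (Icc x (x + r))).toReal ∧ (μ (Icc x (x + r))).toReal ≤ 1 := by
    intro r hr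
    refine ⟨ENNReal.toReal_pos (hμ1pos r hr).ne' (hμfin _), ?_⟩
    have := ENNReal.toReal_mono ENNReal.one_ne_top (prob_le_one (μ := μ) (s := Icc x (x + r)))
    simpa using this
  have hμ2R : ∀ r : ℝ, 0 < r →
      0 < (μ (Icc (x - r) (x + r))).toReal ∧ (μ (Icc (x - r) (x + r))).toReal ≤ 1 := by
    intro r hr
    refine ⟨ENNReal.toReal_pos (hμ2pos r hr).ne' (hμfin _), ?_⟩
    have := ENNReal.toReal_mono ENNReal.one_ne_top (prob_le_one (μ := μ) (s := Icc (x-r) (x+r)))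
    simpa using this
  have hFG : ∀ r : ℝ, 0 < r → r < 1 → 0 ≤ G r ∧ G r ≤ F r ∧ 0 ≤ F r := by
    intro r h0 h1
    have hlogr : Real.log r < 0 := Real.log_neg h0 h1
    obtain ⟨h1p, h1le⟩ := hμ1R r h0
    obtain ⟨h2p, h2le⟩ := hμ2R r h0
    have hlog1 : Real.log (μ (Icc x (x + r))).toReal ≤ 0 := Real.log_nonpos h1p.le h1le
    have hlog2 : Real.log (μ (Icc (x - r) (x + r))).toReal ≤ 0 := Real.log_nonpos h2p.le h2le
    refine ⟨div_nonneg_of_nonpos hlog2 hlogr.le, ?_, div_nonneg_of_nonpos hlog1 hlogr.le⟩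
    have hmono : Real.log (μ (Icc x (x + r))).toReal ≤ Real.log (μ (Icc (x - r) (x + r))).toReal :=
      Real.log_le_log h1p
        (ENNReal.toReal_mono (hμfin _) (measure_mono (Icc_subset_Icc (by linarith) le_rfl)))
    show Real.log (μ (Icc (x-r) (x+r))).toReal / Real.log r
        ≤ Real.log (μ (Icc x (x+r))).toReal / Real.log r
    rw [div_eq_mul_inv, div_eq_mul_inv]
    exact mul_le_mul_of_nonpos_right hmono (inv_nonpos.2 hlogr.le)
  have hev01 : ∀ᶠ r in 𝓝[>] (0:ℝ), 0 < r ∧ r < 1 := by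
    have hU : Ioo (0:ℝ) 1 ∈ 𝓝[>] (0:ℝ) := Ioo_mem_nhdsGT_of_mem (left_mem_Ico.2 one_pos)
    exact eventually_of_mem hU (fun r hr => ⟨hr.1, hr.2⟩)
  -- log constants
  have hlog3 : 0 < Real.log 3 := Real.log_pos (by norm_num)
  set c₁ : ℝ := -Real.log p₁.toReal with hc₁def
  set c₂ : ℝ := -Real.log p₂.toReal with hc₂def
  have hp₁R : 0 < p₁.toReal ∧ p₁.toReal ≤ 1 :=
    ⟨ENNReal.toReal_pos hp₁.ne' hp₁top,
      by simpa using ENNReal.toReal_mono ENNReal.one_ne_top hp₁le⟩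
  have hp₂R : 0 < p₂.toReal ∧ p₂.toReal ≤ 1 :=
    ⟨ENNReal.toReal_pos hp₂.ne' hp₂top,
      by simpa using ENNReal.toReal_mono ENNReal.one_ne_top hp₂le⟩
  have hc₁0 : 0 ≤ c₁ := neg_nonneg.2 (Real.log_nonpos hp₁R.1.le hp₁R.2)
  have hc₂0 : 0 ≤ c₂ := neg_nonneg.2 (Real.log_nonpos hp₂R.1.le hp₂R.2)
  set aR : ℕ → ℝ := fun n => -Real.log ((cylMass p₁ p₂ i n).toReal) with haRdef
  have hmassR_pos : ∀ n, 0 < (cylMass p₁ p₂ i n).toReal :=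
    fun n => ENNReal.toReal_pos (hmass_pos n).ne' (hmass_top n)
  have hmassR_le1 : ∀ n, (cylMass p₁ p₂ i n).toReal ≤ 1 :=
    fun n => by simpa using ENNReal.toReal_mono ENNReal.one_ne_top (hmass_le_one n)
  have haR0 : ∀ n, 0 ≤ aR n :=
    fun n => neg_nonneg.2 (Real.log_nonpos (hmassR_pos n).le (hmassR_le1 n))
  have haRsucc : ∀ n, aR (n+1) = aR n + (if i n = 1 then c₂ else c₁) := by
    intro n
    have hstep : cylMass p₁ p₂ i (n+1) = cylMass p₁ p₂ i n * (if i n = 1 then p₂ else p₁) :=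
      Finset.prod_range_succ _ _
    by_cases h : i n = 1
    · simp only [haRdef, hstep, h, if_true, ENNReal.toReal_mul]
      rw [Real.log_mul (hmassR_pos n).ne' hp₂R.1.ne']
      rw [hc₂def]; ring
    · simp only [haRdef, hstep, h, if_false, ENNReal.toReal_mul]
      rw [Real.log_mul (hmassR_pos n).ne' hp₁R.1.ne']
      rw [hc₁def]; ring
  have haRlin : ∀ n, aR n ≤ n * max c₁ c₂ := by
    intro n
    induction n with
    | zero => simp [haRdef, cylMass]
    | succ n ih =>
      rw [haRsucc]
      have h : (if i n = 1 then c₂ else c₁) ≤ max c₁ c₂ := by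
        split
        · exact le_max_right _ _
        · exact le_max_left _ _
      have hmax0 : 0 ≤ max c₁ c₂ := le_trans hc₁0 (le_max_left _ _)
      push_cast
      linarith
  -- F at dyadic scales with zero digit
  have hlogpow : ∀ m : ℕ, Real.log ((1/3:ℝ)^m) = -((m:ℝ) * Real.log 3) := by
    intro m
    rw [Real.log_pow, one_div, Real.log_inv]
    ring
  have hFpow : ∀ m : ℕ, 1 ≤ m → i m = 0 →
      F ((1/3:ℝ)^m) ≤ (aR m + c₂) / ((m:ℝ) * Real.log 3) := by
    intro m hm1 hm0
    have hmR : (1:ℝ) ≤ (m:ℝ) := Nat.one_le_cast.2 hm1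
    have hD : (0:ℝ) < (m:ℝ) * Real.log 3 := by nlinarith
    have hmuR : p₂.toReal * (cylMass p₁ p₂ i m).toReal
        ≤ (μ (Icc x (x + (1/3:ℝ)^m))).toReal := by
      rw [← ENNReal.toReal_mul]
      exact ENNReal.toReal_mono (hμfin _) (lower1 m hm0)
    have hlogmu : -(Real.log (μ (Icc x (x + (1/3:ℝ)^m))).toReal) ≤ aR m + c₂ := by
      have hpos : 0 < p₂.toReal * (cylMass p₁ p₂ i m).toReal :=
        mul_pos hp₂R.1 (hmassR_pos m)
      have hll := Real.log_le_log hpos hmuR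
      rw [Real.log_mul hp₂R.1.ne' (hmassR_pos m).ne'] at hll
      simp only [haRdef, hc₂def]
      linarith
    have hFval : F ((1/3:ℝ)^m)
        = (-(Real.log (μ (Icc x (x + (1/3:ℝ)^m))).toReal)) / ((m:ℝ) * Real.log 3) := by
      simp only [hFdef]
      rw [hlogpow m, div_neg, ← neg_div]
    rw [hFval]
    gcongr

  -- G lower bound at generic scales
  have hGlow : ∀ (r : ℝ) (n : ℕ), 0 < r → r < 1 → (1/3:ℝ)^(n+1) ≤ r → r < (1/3:ℝ)^n →
      aR n / (((n:ℝ)+1) * Real.log 3) ≤ G r := by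
    intro r n h0 h1 hr1 hr2
    have hlogr : Real.log r < 0 := Real.log_neg h0 h1
    have hD : -Real.log r ≤ ((n:ℝ)+1) * Real.log 3 := by
      have hll := Real.log_le_log (by positivity) hr1
      rw [hlogpow (n+1)] at hll
      push_cast at hll
      linarith
    have hμ2m : (μ (Icc (x - r) (x + r))).toReal ≤ (cylMass p₁ p₂ i n).toReal :=
      ENNReal.toReal_mono (hmass_top n) (upper2 n r hr2)
    obtain ⟨h2p, _⟩ := hμ2R r h0
    have hlogm : aR n ≤ -Real.log (μ (Icc (x - r) (x + r))).toReal := by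
      have := Real.log_le_log h2p hμ2m
      simp only [haRdef]
      linarith
    have hGval : G r = (-Real.log (μ (Icc (x - r) (x + r))).toReal) / (-Real.log r) := by
      simp only [hGdef]
      rw [neg_div_neg_eq]
    rw [hGval]
    calc aR n / (((n:ℝ)+1) * Real.log 3) ≤ aR n / (-Real.log r) := by
          apply div_le_div_of_nonneg_left (haR0 n) (by linarith) hD
      _ ≤ (-Real.log (μ (Icc (x - r) (x + r))).toReal) / (-Real.log r) := by
          gcongr
          linarith
  -- scale decomposition
  have hscale : ∀ r : ℝ, 0 < r → r < 1 →
      ∃ n : ℕ, (1/3:ℝ)^(n+1) ≤ r ∧ r < (1/3:ℝ)^n := by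
    intro r h0 h1
    have hex : ∃ k, (1/3:ℝ)^k ≤ r :=
      (exists_pow_lt_of_lt_one h0 (by norm_num)).imp fun k h => h.le
    have hspec : (1/3:ℝ)^(Nat.find hex) ≤ r := Nat.find_spec hex
    have hne : Nat.find hex ≠ 0 := by
      intro h
      rw [h] at hspec
      simp at hspec
      linarith
    obtain ⟨n, hn⟩ := Nat.exists_eq_succ_of_ne_zero hne
    rw [hn] at hspec
    refine ⟨n, hspec, ?_⟩
    have := Nat.find_min hex (m := n) (by omega)
    linarith [not_le.mp this]
  -- frequently small scales with controlled F
  have hfreq_of : ∀ (c : ℝ), (∀ N, ∃ m, N ≤ m ∧ 1 ≤ m ∧ i m = 0 ∧ F ((1/3:ℝ)^m) ≤ c) →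
      ∃ᶠ r in 𝓝[>] (0:ℝ), F r ≤ c := by
    intro c h
    rw [frequently_iff]
    intro U hU
    obtain ⟨ε', hε', hsub⟩ := mem_nhdsGT_iff_exists_Ioc_subset.mp hU
    rw [mem_Ioi] at hε'
    obtain ⟨K, hK⟩ := exists_pow_lt_of_lt_one hε' (by norm_num : (1/3:ℝ) < 1)
    obtain ⟨m, hmK, hm1, hm0, hFm⟩ := h (K+1)
    refine ⟨(1/3:ℝ)^m, hsub ⟨by positivity, ?_⟩, hFm⟩
    calc (1/3:ℝ)^m ≤ (1/3:ℝ)^K := pow_le_pow_of_le_one (by norm_num) (by norm_num) (by omega)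
      _ ≤ ε' := hK.le
  -- uniform bound at zero-digit scales
  have hC0 : ∀ m : ℕ, 1 ≤ m → i m = 0 →
      F ((1/3:ℝ)^m) ≤ (max c₁ c₂ + c₂) / Real.log 3 := by
    intro m hm1 hm0
    refine le_trans (hFpow m hm1 hm0) ?_
    have hmR : (1:ℝ) ≤ (m:ℝ) := Nat.one_le_cast.2 hm1
    have hmne : (m:ℝ) ≠ 0 := by linarith
    calc (aR m + c₂) / ((m:ℝ) * Real.log 3)
        ≤ ((m:ℝ) * (max c₁ c₂ + c₂)) / ((m:ℝ) * Real.log 3) := by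
          gcongr
          have h1 := haRlin m
          have h2 : c₂ ≤ (m:ℝ) * c₂ := le_mul_of_one_le_left hc₂0 hmR
          nlinarith
      _ = (max c₁ c₂ + c₂) / Real.log 3 := mul_div_mul_left _ _ hmne
  have hfreqF : ∃ᶠ r in 𝓝[>] (0:ℝ), F r ≤ (max c₁ c₂ + c₂) / Real.log 3 := by
    apply hfreq_of
    intro N
    obtain ⟨m, hmN, hm0⟩ := hzeros (N+1)
    exact ⟨m, by omega, by omega, hm0, hC0 m (by omega) hm0⟩
  have hfreqG : ∃ᶠ r in 𝓝[>] (0:ℝ), G r ≤ (max c₁ c₂ + c₂) / Real.log 3 :=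
    (hfreqF.and_eventually hev01).mono fun r ⟨h, h0, h1⟩ =>
      le_trans (hFG r h0 h1).2.1 h
  have hcobF : IsCoboundedUnder (· ≥ ·) (𝓝[>] (0:ℝ)) F :=
    IsCoboundedUnder.of_frequently_le hfreqF
  have hcobG : IsCoboundedUnder (· ≥ ·) (𝓝[>] (0:ℝ)) G :=
    IsCoboundedUnder.of_frequently_le hfreqG
  have hbddF : IsBoundedUnder (· ≥ ·) (𝓝[>] (0:ℝ)) F := by
    refine ⟨0, ?_⟩
    rw [eventually_map]
    filter_upwards [hev01] with r hr
    exact (hFG r hr.1 hr.2).2.2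
  have hbddG : IsBoundedUnder (· ≥ ·) (𝓝[>] (0:ℝ)) G := by
    refine ⟨0, ?_⟩
    rw [eventually_map]
    filter_upwards [hev01] with r hr
    exact (hFG r hr.1 hr.2).1
  -- step A : liminf G ≤ liminf F
  have hA : liminf G (𝓝[>] (0:ℝ)) ≤ liminf F (𝓝[>] (0:ℝ)) := by
    apply liminf_le_liminf ?_ hbddG hcobF
    filter_upwards [hev01] with r hr
    exact (hFG r hr.1 hr.2).2.1
  -- step B : liminf F ≤ liminf G
  have hB : liminf F (𝓝[>] (0:ℝ)) ≤ liminf G (𝓝[>] (0:ℝ)) := by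
    have hlimG0 : 0 ≤ liminf G (𝓝[>] (0:ℝ)) := by
      apply le_liminf_of_le hcobG
      filter_upwards [hev01] with r hr
      exact (hFG r hr.1 hr.2).1
    by_contra hcon
    push_neg at hcon
    set ε : ℝ := (liminf F (𝓝[>] (0:ℝ)) - liminf G (𝓝[>] (0:ℝ))) / 2 with hεdef
    have hε : 0 < ε := by simp only [hεdef]; linarith
    suffices hsuff : liminf F (𝓝[>] (0:ℝ)) ≤ liminf G (𝓝[>] (0:ℝ)) + ε by
      simp only [hεdef] at hsuff
      linarith
    set t : ℝ := liminf G (𝓝[>] (0:ℝ)) + ε/2 with htdef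
    have ht0 : 0 < t := by simp only [htdef]; linarith
    obtain ⟨M, hM⟩ := exists_nat_ge ((2*t*Real.log 3 + c₂) / (ε/2 * Real.log 3))
    have hMprop : ∀ m : ℕ, M ≤ m → 2*t*Real.log 3 + c₂ ≤ ε/2 * ((m:ℝ) * Real.log 3) := by
      intro m hm
      have hm' : (M:ℝ) ≤ (m:ℝ) := Nat.cast_le.2 hm
      rw [div_le_iff₀ (by positivity)] at hM
      calc 2*t*Real.log 3 + c₂ ≤ (M:ℝ) * (ε/2 * Real.log 3) := hM
        _ ≤ (m:ℝ) * (ε/2 * Real.log 3) := by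
            apply mul_le_mul_of_nonneg_right hm' (by positivity)
        _ = ε/2 * ((m:ℝ) * Real.log 3) := by ring
    have hclaim : ∀ N, ∃ m, N ≤ m ∧ 1 ≤ m ∧ i m = 0 ∧
        F ((1/3:ℝ)^m) ≤ liminf G (𝓝[>] (0:ℝ)) + ε := by
      intro N
      obtain ⟨z, hzN, hz0⟩ := hzeros (max (max N M) 1)
      have hfreqGt : ∃ᶠ r in 𝓝[>] (0:ℝ), G r < t :=
        frequently_lt_of_liminf_lt hcobG (by simp only [htdef]; linarith)
      have hU : Ioo (0:ℝ) ((1/3:ℝ)^(z+2)) ∈ 𝓝[>] (0:ℝ) :=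
        Ioo_mem_nhdsGT_of_mem (left_mem_Ico.2 (by positivity))
      obtain ⟨r, hGrt, hr0, hrz2⟩ :=
        (hfreqGt.and_eventually (eventually_of_mem hU (fun y hy => hy))).exists
      have hr1 : r < 1 :=
        lt_of_lt_of_le hrz2 (pow_le_one₀ (by norm_num) (by norm_num))
      obtain ⟨n, hn1, hn2⟩ := hscale r hr0 hr1
      have hnz : z + 2 ≤ n := by
        by_contra hc2
        push_neg at hc2
        have : (1/3:ℝ)^(z+2) ≤ (1/3:ℝ)^(n+1) :=
          pow_le_pow_of_le_one (by norm_num) (by norm_num) (by omega)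
        linarith
      have hGrn := hGlow r n hr0 hr1 hn1 hn2
      have haRn : aR n ≤ t * (((n:ℝ)+1) * Real.log 3) := by
        have h := lt_of_le_of_lt hGrn hGrt
        rw [div_lt_iff₀ (by positivity)] at h
        linarith
      have hmain : ∃ m, max (max N M) 1 ≤ m ∧ i m = 0 ∧
          aR m ≤ t * (((m:ℝ)+2) * Real.log 3) := by
        rcases fin2_cases (i n) with hin | hin
        · refine ⟨n, by omega, hin, ?_⟩
          nlinarith
        · by_cases hcc : c₂ ≤ t * Real.log 3
          · -- forward search
            have hexz : ∃ k, i (n + k) = 0 := by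
              obtain ⟨m', hm', h0'⟩ := hzeros n
              exact ⟨m' - n, by rwa [Nat.add_sub_cancel' hm']⟩
            have hk0spec : i (n + Nat.find hexz) = 0 := Nat.find_spec hexz
            have hones : ∀ l, l < Nat.find hexz → i (n + l) = 1 :=
              fun l hl => hfin2' _ (Nat.find_min hexz hl)
            have haRline : ∀ l, l ≤ Nat.find hexz → aR (n + l) = aR n + l * c₂ := by
              intro l hl
              induction l with
              | zero => simp
              | succ l ihl =>
                rw [show n + (l+1) = (n+l)+1 by omega]
                rw [haRsucc, ihl (by omega), if_pos (hones l (by omega))]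
                push_cast
                ring
            refine ⟨n + Nat.find hexz, by omega, hk0spec, ?_⟩
            rw [haRline _ le_rfl]
            have hkc : (Nat.find hexz : ℝ) * c₂ ≤ (Nat.find hexz : ℝ) * (t * Real.log 3) :=
              mul_le_mul_of_nonneg_left hcc (Nat.cast_nonneg _)
            push_cast
            nlinarith
          · -- backward search
            push_neg at hcc
            have hzn : z ≤ n := by omega
            have hexz : ∃ k, i (n - k) = 0 := ⟨n - z, by rwa [Nat.sub_sub_self hzn]⟩
            have hk1spec : i (n - Nat.find hexz) = 0 := Nat.find_spec hexz
            have hk1le : Nat.find hexz ≤ n - z :=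
              Nat.find_min' hexz (by rwa [Nat.sub_sub_self hzn])
            have hones : ∀ l, l < Nat.find hexz → i (n - l) = 1 :=
              fun l hl => hfin2' _ (Nat.find_min hexz hl)
            have hk1pos : 1 ≤ Nat.find hexz := by
              rcases Nat.eq_zero_or_pos (Nat.find hexz) with h | h
              · exfalso
                rw [h, Nat.sub_zero] at hk1spec
                rw [hk1spec] at hin
                exact absurd hin (by decide)
              · exact h
            set k₁ := Nat.find hexz with hk₁def
            set m := n - k₁ with hmdef
            have hmk : n = m + k₁ := by omega
            have hones' : ∀ jj, 1 ≤ jj → jj ≤ k₁ → i (m + jj) = 1 := by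
              intro jj hj1 hj2
              have he : m + jj = n - (k₁ - jj) := by omega
              rw [he]
              exact hones (k₁ - jj) (by omega)
            have haRline : ∀ l, l ≤ k₁ - 1 → aR (m+1+l) = aR (m+1) + l * c₂ := by
              intro l hl
              induction l with
              | zero => simp
              | succ l ihl =>
                have hd : i (m+1+l) = 1 := by
                  have := hones' (l+1) (by omega) (by omega)
                  rwa [show m + (l+1) = m+1+l by omega] at this
                rw [show m+1+(l+1) = (m+1+l)+1 by omega]
                rw [haRsucc, ihl (by omega), if_pos hd]
                push_cast
                ring
            have haRn' : aR n = aR (m+1) + ((k₁:ℝ) - 1) * c₂ := by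
              have hh := haRline (k₁ - 1) le_rfl
              rw [show m+1+(k₁-1) = n by omega] at hh
              rw [hh]
              congr 1
              rw [Nat.cast_sub hk1pos]
              norm_num
            have haRm1 : aR (m+1) = aR m + c₁ := by
              rw [haRsucc]
              have hne1 : ¬ (i m = 1) := by
                rw [hk1spec]
                decide
              rw [if_neg hne1]
            refine ⟨m, by omega, hk1spec, ?_⟩
            have hcast : (n:ℝ) = (m:ℝ) + (k₁:ℝ) := by exact_mod_cast congrArg Nat.cast hmk
            have hk1R : (1:ℝ) ≤ (k₁:ℝ) := Nat.one_le_cast.2 hk1pos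
            have hstep2 : ((k₁:ℝ)-1) * (t*Real.log 3) ≤ ((k₁:ℝ)-1) * c₂ :=
              mul_le_mul_of_nonneg_left hcc.le (by linarith)
            nlinarith [haRn, haRn', haRm1, hc₁0]
      obtain ⟨m, hmge, hm0, hmbound⟩ := hmain
      have hmN : N ≤ m := le_trans (le_trans (le_max_left N M) (le_max_left _ 1)) hmge
      have hmM : M ≤ m := le_trans (le_trans (le_max_right N M) (le_max_left _ 1)) hmge
      have hm1 : 1 ≤ m := le_trans (le_max_right _ 1) hmge
      refine ⟨m, hmN, hm1, hm0, ?_⟩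
      have hFm := hFpow m hm1 hm0
      have hMle := hMprop m hmM
      have hmR1 : (1:ℝ) ≤ (m:ℝ) := Nat.one_le_cast.2 hm1
      have hDpos : (0:ℝ) < (m:ℝ) * Real.log 3 := by nlinarith
      calc F ((1/3:ℝ)^m) ≤ (aR m + c₂)/((m:ℝ) * Real.log 3) := hFm
        _ ≤ t + ε/2 := by
            rw [div_le_iff₀ hDpos]
            calc aR m + c₂ ≤ t * (((m:ℝ)+2) * Real.log 3) + c₂ := by linarith
              _ = t * ((m:ℝ) * Real.log 3) + (2*t*Real.log 3 + c₂) := by ring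
              _ ≤ t * ((m:ℝ) * Real.log 3) + ε/2 * ((m:ℝ) * Real.log 3) := by linarith
              _ = (t + ε/2) * ((m:ℝ) * Real.log 3) := by ring
        _ = liminf G (𝓝[>] (0:ℝ)) + ε := by simp only [htdef]; ring
    exact liminf_le_of_frequently_le (hfreq_of _ hclaim) hbddF
  exact le_antisymm hB hA
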